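/- Let ℒ ⊂ ℝ^{n+1} be a lattice such that ℒ ∩ (ℝ^n × {0}) contains n linearly independent vectors, and set 𝓛̃ = P(ℒ ∩ (ℝ^n × {0})), 𝓛̃* = {k̃ ∈ ℝ^n : ⟨k̃,v⟩ ∈ ℤ for all v ∈ 𝓛̃}, and 𝒳_𝓛̃ the ℂ-linear span of {ω_{k̃} : k̃ ∈ 𝓛̃*}. Then there exists a countable set K ⊂ ℝ (namely K = ⋃ {(1/z)·ℤ : (k̃,z) ∈ ℒ*, z ≠ 0}) such that for every y0 > 0 with y0 ∉ K, one has Π_{y0}(𝒳_ℒ) = 𝒳_𝓛̃; in particular this equality holds for almost all y0. -/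

import Mathlib

open MeasureTheory
open scoped Classical

noncomputable section

/-- The Euclidean dot product on `ℝⁿ`. -/
def dotn {n : ℕ} (a b : Fin n → ℝ) : ℝ := ∑ i, a i * b i

/-- `ℝ^{n+1}` viewed as `ℝⁿ × ℝ`, points written `(x, y)`. -/
abbrev V1 (n : ℕ) := (Fin n → ℝ) × ℝ

/-- The standard inner product on `ℝ^{n+1} = ℝⁿ × ℝ`. -/
def dot1 {n : ℕ} (k p : V1 n) : ℝ := dotn k.1 p.1 + k.2 * p.2

/-- `e^{2πit}`. -/
def expz (t : ℝ) : ℂ := Complex.exp (2 * (Real.pi : ℂ) * Complex.I * (t : ℂ))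

/-- The wave `ω_k` on `ℝ^{n+1}`. -/
def wave {n : ℕ} (k : V1 n) : V1 n → ℂ := fun p => expz (dot1 k p)

/-- The wave `ω_k̃` on `ℝⁿ`. -/
def waveN {n : ℕ} (k : Fin n → ℝ) : (Fin n → ℝ) → ℂ := fun x => expz (dotn k x)

/-- The projection operator `Π_{y0}`. -/
def Proj {n : ℕ} (y0 : ℝ) (f : V1 n → ℂ) : (Fin n → ℝ) → ℂ :=
  fun x => ∫ y in (0:ℝ)..y0, f (x, y)

/-- The lattice generated over `ℤ` by the vectors `b i`. -/
def latticeOf {n : ℕ} (b : Fin (n+1) → V1 n) : Set (V1 n) :=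
  {v | ∃ c : Fin (n+1) → ℤ, v = ∑ i, (c i : ℝ) • b i}

/-- The dual lattice `ℒ*` of a subset of `ℝ^{n+1}`. -/
def dualLat {n : ℕ} (L : Set (V1 n)) : Set (V1 n) :=
  {k | ∀ l ∈ L, ∃ m : ℤ, dot1 k l = (m : ℝ)}

/-- The dual lattice of a subset of `ℝⁿ`. -/
def dualN {n : ℕ} (Lt : Set (Fin n → ℝ)) : Set (Fin n → ℝ) :=
  {k | ∀ v ∈ Lt, ∃ m : ℤ, dotn k v = (m : ℝ)}

/-- `𝒳_ℒ`: the ℂ-linear span of the waves `ω_k`, `k ∈ ℒ*`. -/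
def XL {n : ℕ} (L : Set (V1 n)) : Submodule ℂ (V1 n → ℂ) :=
  Submodule.span ℂ (wave '' dualLat L)

/-- The ℂ-linear span of the waves `ω_k̃`, `k̃` in the dual of a planar lattice. -/
def XN {n : ℕ} (Lt : Set (Fin n → ℝ)) : Submodule ℂ ((Fin n → ℝ) → ℂ) :=
  Submodule.span ℂ (waveN '' dualN Lt)

/-- Membership in `O(n)`: a linear automorphism of `ℝⁿ` preserving the dot product. -/
def IsOrthoN {n : ℕ} (α : (Fin n → ℝ) ≃ₗ[ℝ] (Fin n → ℝ)) : Prop :=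
  ∀ a b, dotn (α a) (α b) = dotn a b

/-- Membership in `O(n+1)`: a linear automorphism of `ℝ^{n+1}` preserving the inner product. -/
def IsOrtho1 {n : ℕ} (δ : V1 n ≃ₗ[ℝ] V1 n) : Prop :=
  ∀ a b, dot1 (δ a) (δ b) = dot1 a b

/-- The holohedry `H_ℒ`: orthogonal transformations mapping `ℒ` to itself. -/
def HolL {n : ℕ} (L : Set (V1 n)) : Set (V1 n ≃ₗ[ℝ] V1 n) :=
  {γ | IsOrtho1 γ ∧ (⇑γ) '' L = L}

/-- `α₊`: acts as `α` on `ℝⁿ` and `+1` on the last coordinate. -/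
def aPlus {n : ℕ} (α : (Fin n → ℝ) ≃ₗ[ℝ] (Fin n → ℝ)) : V1 n ≃ₗ[ℝ] V1 n :=
  α.prodCongr (LinearEquiv.refl ℝ ℝ)

/-- `α₋`: acts as `α` on `ℝⁿ` and `−1` on the last coordinate. -/
def aMinus {n : ℕ} (α : (Fin n → ℝ) ≃ₗ[ℝ] (Fin n → ℝ)) : V1 n ≃ₗ[ℝ] V1 n :=
  α.prodCongr (LinearEquiv.neg ℝ)

/-- The group `J̃` of induced orthogonal symmetries. -/
def Jt {n : ℕ} (L : Set (V1 n)) (y0 : ℝ) : Set ((Fin n → ℝ) ≃ₗ[ℝ] (Fin n → ℝ)) :=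
  {α | IsOrthoN α ∧
    (aPlus α ∈ HolL L ∨ ((((0 : Fin n → ℝ), y0) : V1 n) ∈ L ∧ aMinus α ∈ HolL L))}

/-- The subset `J̃↑` of `H_ℒ`. -/
def Jup {n : ℕ} (L : Set (V1 n)) (y0 : ℝ) : Set (V1 n ≃ₗ[ℝ] V1 n) :=
  {γ | ∃ α ∈ Jt L y0,
    (γ = aPlus α ∧ aPlus α ∈ HolL L) ∨ (γ = aMinus α ∧ aMinus α ∈ HolL L)}

/-- The set `J^α_k = {δ ∈ H_ℒ : P(δk) = α k̃}`. -/
def Jset {n : ℕ} (L : Set (V1 n)) (k : V1 n) (α : (Fin n → ℝ) ≃ₗ[ℝ] (Fin n → ℝ)) :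
    Set (V1 n ≃ₗ[ℝ] V1 n) :=
  {δ ∈ HolL L | (δ k).1 = α k.1}

/-- The set `J^{Id}_k = {δ ∈ H_ℒ : P(δk) = k̃}`. -/
def JId {n : ℕ} (L : Set (V1 n)) (k : V1 n) : Set (V1 n ≃ₗ[ℝ] V1 n) :=
  {δ ∈ HolL L | (δ k).1 = k.1}

/-- The set `S_k = ⋃_{α ∈ J̃} J^α_k`. -/
def Sk {n : ℕ} (L : Set (V1 n)) (y0 : ℝ) (k : V1 n) : Set (V1 n ≃ₗ[ℝ] V1 n) :=
  ⋃ α ∈ Jt L y0, Jset L k α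

/-- The isotropy subgroup `Σ_k` of `k` in `H_ℒ`. -/
def Sigk {n : ℕ} (L : Set (V1 n)) (k : V1 n) : Set (V1 n ≃ₗ[ℝ] V1 n) :=
  {δ ∈ HolL L | δ k = k}

/-- The orbit `H_ℒ·k`. -/
def HOrb {n : ℕ} (L : Set (V1 n)) (k : V1 n) : Set (V1 n) :=
  (fun δ : V1 n ≃ₗ[ℝ] V1 n => δ k) '' HolL L

/-- The orbit `J̃·u`. -/
def JOrb {n : ℕ} (L : Set (V1 n)) (y0 : ℝ) (u : Fin n → ℝ) : Set (Fin n → ℝ) :=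
  (fun α : (Fin n → ℝ) ≃ₗ[ℝ] (Fin n → ℝ) => α u) '' Jt L y0

/-- The single mode `V`: the ℂ-span of the waves `ω_{δk}`, `δ ∈ H_ℒ`. -/
def modeV {n : ℕ} (L : Set (V1 n)) (k : V1 n) : Submodule ℂ (V1 n → ℂ) :=
  Submodule.span ℂ ((fun δ : V1 n ≃ₗ[ℝ] V1 n => wave (δ k)) '' HolL L)

/-- The projected lattice `𝓛̃`. -/
def projLat {n : ℕ} (L : Set (V1 n)) (y0 : ℝ) : Set (Fin n → ℝ) :=
  if (((0 : Fin n → ℝ), y0) : V1 n) ∈ L then Prod.fst '' L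
  else Prod.fst '' (L ∩ {p : V1 n | p.2 = 0})

section Aux
variable {n : ℕ}

lemma dotn_add_right (u x y : Fin n → ℝ) : dotn u (x + y) = dotn u x + dotn u y := by
  simp [dotn, mul_add, Finset.sum_add_distrib]

lemma dotn_smul_right (u : Fin n → ℝ) (t : ℝ) (x : Fin n → ℝ) :
    dotn u (t • x) = t * dotn u x := by
  simp only [dotn, Pi.smul_apply, smul_eq_mul, Finset.mul_sum]
  exact Finset.sum_congr rfl fun i _ => by ring

lemma dotn_sub_right (u x y : Fin n → ℝ) : dotn u (x - y) = dotn u x - dotn u y := by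
  simp [dotn, mul_sub, Finset.sum_sub_distrib]

def dot1L (k : V1 n) : V1 n →ₗ[ℝ] ℝ where
  toFun p := dot1 k p
  map_add' p q := by
    simp only [dot1, Prod.fst_add, Prod.snd_add, dotn_add_right]; ring
  map_smul' t p := by
    simp only [dot1, Prod.smul_fst, Prod.smul_snd, dotn_smul_right, smul_eq_mul,
      RingHom.id_apply]; ring

lemma dot1_sum {ι : Type*} (k : V1 n) (s : Finset ι) (f : ι → V1 n) :
    dot1 k (∑ i ∈ s, f i) = ∑ i ∈ s, dot1 k (f i) :=
  map_sum (dot1L k) f s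

lemma dot1_zsmul (k : V1 n) (c : ℤ) (v : V1 n) : dot1 k ((c : ℝ) • v) = c * dot1 k v :=
  (dot1L k).map_smul (c:ℝ) v

lemma dot1_sub_left (k k' v : V1 n) : dot1 (k - k') v = dot1 k v - dot1 k' v := by
  simp [dot1, dotn, sub_mul, Finset.sum_sub_distrib, Prod.fst_sub, Prod.snd_sub]; ring

lemma dot1_self_eq_zero {d : V1 n} (h : dot1 d d = 0) : d = 0 := by
  have h1 : (0:ℝ) ≤ ∑ i, d.1 i * d.1 i :=
    Finset.sum_nonneg fun i _ => mul_self_nonneg _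
  have h2 : (0:ℝ) ≤ d.2 * d.2 := mul_self_nonneg _
  simp only [dot1, dotn] at h
  have hs : ∑ i, d.1 i * d.1 i = 0 ∧ d.2 * d.2 = 0 := by
    constructor <;> nlinarith [h, h1, h2]
  have hd1 : d.1 = 0 := by
    funext i
    have := (Finset.sum_eq_zero_iff_of_nonneg (fun i _ => mul_self_nonneg (d.1 i))).1 hs.1 i
      (Finset.mem_univ i)
    exact mul_self_eq_zero.1 this
  have hd2 : d.2 = 0 := mul_self_eq_zero.1 hs.2
  exact Prod.ext hd1 hd2

end Aux

section Crux
variable {n : ℕ}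

/-- A nonzero rational kernel vector for an integer matrix with fewer rows than columns. -/
lemma exists_rat_kernel (A : Fin n → Fin (n+1) → ℤ) :
    ∃ v : Fin (n+1) → ℚ, v ≠ 0 ∧ ∀ i, ∑ j, (A i j : ℚ) * v j = 0 := by
  set M : Matrix (Fin n) (Fin (n+1)) ℚ := fun i j => (A i j : ℚ) with hM
  have hni : ¬ Function.Injective M.mulVecLin := by
    intro hinj
    have hle := LinearMap.finrank_le_finrank_of_injective hinj
    simp [Module.finrank_pi] at hle
  rw [Function.not_injective_iff] at hni
  obtain ⟨x, y, hxy, hne⟩ := hni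
  refine ⟨x - y, sub_ne_zero.2 hne, fun i => ?_⟩
  have : M.mulVecLin (x - y) = 0 := by rw [map_sub, hxy, sub_self]
  rw [Matrix.mulVecLin_apply] at this
  have h2 := congrFun this i
  simpa [Matrix.mulVecLin_apply, Matrix.mulVec, dotProduct, hM, mul_comm,
    Finset.sum_sub_distrib, mul_sub] using h2

/-- Scale a rational kernel vector to an integer one. -/
lemma exists_int_kernel (A : Fin n → Fin (n+1) → ℤ)
    (v : Fin (n+1) → ℚ) (hv : v ≠ 0) (hker : ∀ i, ∑ j, (A i j : ℚ) * v j = 0) :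
    ∃ (p : Fin (n+1) → ℤ) (D : ℤ), 0 < D ∧ p ≠ 0 ∧ (∀ j, (p j : ℚ) = v j * D) ∧
      ∀ i, ∑ j, A i j * p j = 0 := by
  set D : ℤ := ∏ j, ((v j).den : ℤ) with hD
  have hDpos : 0 < D := Finset.prod_pos fun j _ => by positivity
  have hdvd : ∀ j, ((v j).den : ℤ) ∣ D := fun j => Finset.dvd_prod_of_mem _ (Finset.mem_univ j)
  set p : Fin (n+1) → ℤ := fun j => (v j).num * (D / ((v j).den : ℤ)) with hp
  have hcast : ∀ j, (p j : ℚ) = v j * D := by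
    intro j
    obtain ⟨e, he⟩ := hdvd j
    have hden : ((v j).den : ℤ) ≠ 0 := by positivity
    have hdiv : D / ((v j).den : ℤ) = e := by rw [he]; exact Int.mul_ediv_cancel_left _ hden
    rw [hp]
    simp only [hdiv]
    push_cast [he]
    rw [show (v j : ℚ) * (((v j).den : ℚ) * (e:ℚ)) = (v j * (v j).den) * e by ring,
      Rat.mul_den_eq_num]
  have hpne : p ≠ 0 := by
    intro h0
    apply hv
    funext j
    have := hcast j
    rw [h0] at this
    simp at this
    rcases this with h | h
    · exact h
    · exact absurd h (by exact_mod_cast hDpos.ne')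
  refine ⟨p, D, hDpos, hpne, hcast, fun i => ?_⟩
  have : ((∑ j, A i j * p j : ℤ) : ℚ) = 0 := by
    push_cast
    calc ∑ j, (A i j : ℚ) * (p j : ℚ) = ∑ j, ((A i j : ℚ) * v j) * D := by
          refine Finset.sum_congr rfl fun j _ => ?_
          rw [hcast j]; ring
      _ = (∑ j, (A i j : ℚ) * v j) * D := by rw [Finset.sum_mul]
      _ = 0 := by rw [hker i]; ring
  exact_mod_cast this

end Crux

section Dim
variable {n : ℕ}

lemma beta_eq_smul (A : Fin n → Fin (n+1) → ℤ) (β : Fin (n+1) → ℝ)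
    (hA : ∀ g : Fin n → ℝ, (∀ j, ∑ i, g i * (A i j : ℝ) = 0) → g = 0)
    (horth : ∀ i, ∑ j, (A i j : ℝ) * β j = 0)
    (p : Fin (n+1) → ℤ) (hp : p ≠ 0) (hpker : ∀ i, ∑ j, A i j * p j = 0) :
    ∃ t : ℝ, ∀ j, β j = t * (p j : ℝ) := by
  set E := EuclideanSpace ℝ (Fin (n+1)) with hE
  set le : (Fin (n+1) → ℝ) ≃ₗ[ℝ] E := (WithLp.linearEquiv 2 ℝ (Fin (n+1) → ℝ)).symm with hle
  have le_apply : ∀ (x : Fin (n+1) → ℝ) (j : Fin (n+1)), (le x) j = x j := fun x j => rfl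
  have inner_le : ∀ x y : Fin (n+1) → ℝ,
      (inner ℝ (le x) (le y) : ℝ) = ∑ j, x j * y j := by
    intro x y
    rw [PiLp.inner_apply]
    exact Finset.sum_congr rfl fun j _ => by
      simp [le_apply, RCLike.inner_apply', starRingEnd_apply, mul_comm]
  set rows : Fin n → (Fin (n+1) → ℝ) := fun i j => (A i j : ℝ) with hrows
  have hrowsli : LinearIndependent ℝ rows := by
    rw [Fintype.linearIndependent_iff]
    intro g hg
    have : ∀ j, ∑ i, g i * (A i j : ℝ) = 0 := by
      intro j
      have := congrFun hg j
      simpa [rows, Finset.sum_apply] using this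
    have := hA g this
    exact fun i => congrFun this i
  set aE : Fin n → E := fun i => le (rows i) with haE
  have haEli : LinearIndependent ℝ aE :=
    hrowsli.map' le.toLinearMap le.ker
  set U : Submodule ℝ E := Submodule.span ℝ (Set.range aE) with hU
  have hUrank : Module.finrank ℝ U = n := by
    rw [hU, finrank_span_eq_card haEli, Fintype.card_fin]
  have hErank : Module.finrank ℝ E = n + 1 := finrank_euclideanSpace_fin
  have hOrank : Module.finrank ℝ (Uᗮ : Submodule ℝ E) = 1 := by
    have := Submodule.finrank_add_finrank_orthogonal U
    omega
  have mem_orth : ∀ x : Fin (n+1) → ℝ, (∀ i, ∑ j, (A i j : ℝ) * x j = 0) → le x ∈ Uᗮ := by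
    intro x hx
    rw [Submodule.mem_orthogonal]
    intro u hu
    induction hu using Submodule.span_induction with
    | mem u hu =>
        obtain ⟨i, rfl⟩ := hu
        rw [inner_le]
        exact hx i
    | zero => exact inner_zero_left _
    | add u v _ _ hu hv => rw [inner_add_left, hu, hv]; ring
    | smul c u _ hu => rw [real_inner_smul_left, hu]; ring
  set pE : E := le (fun j => (p j : ℝ)) with hpE
  have hpEne : pE ≠ 0 := by
    intro h0
    apply hp
    have : (fun j => (p j : ℝ)) = 0 := le.injective (by rw [map_zero]; exact h0)
    funext j
    have h2 : ((p j : ℝ)) = 0 := by simpa using congrFun this j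
    exact_mod_cast h2
  have hpEmem : pE ∈ Uᗮ := mem_orth _ (fun i => by exact_mod_cast congrArg (Int.cast : ℤ → ℝ) (hpker i))
  have hβmem : le β ∈ Uᗮ := mem_orth β horth
  have hspan : Submodule.span ℝ {pE} = Uᗮ := by
    apply Submodule.eq_of_le_of_finrank_le
    · rw [Submodule.span_singleton_le_iff_mem]; exact hpEmem
    · rw [hOrank, finrank_span_singleton hpEne]
  have : le β ∈ Submodule.span ℝ {pE} := hspan ▸ hβmem
  obtain ⟨t, ht⟩ := Submodule.mem_span_singleton.1 this
  refine ⟨t, fun j => ?_⟩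
  have : le β = le (t • fun j => (p j : ℝ)) := by
    rw [_root_.map_smul]; exact ht.symm
  have hβ : β = t • fun j => (p j : ℝ) := le.injective this
  have := congrFun hβ j
  simpa using this
end Dim

section Lift
variable {n : ℕ}

lemma exists_gcd (p : Fin (n+1) → ℤ) (hp : p ≠ 0) :
    ∃ a : ℤ, a ≠ 0 ∧ (∃ c : Fin (n+1) → ℤ, ∑ j, c j * p j = a) ∧ ∀ j, a ∣ p j := by
  obtain ⟨a, ha⟩ := Submodule.IsPrincipal.principal (Ideal.span (Set.range p))
  have hdvd : ∀ j, a ∣ p j := by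
    intro j
    have : p j ∈ Ideal.span (Set.range p) := Ideal.subset_span ⟨j, rfl⟩
    rw [ha] at this
    exact Ideal.mem_span_singleton.1 this
  have hamem : a ∈ Ideal.span (Set.range p) := by
    rw [ha]; exact Ideal.mem_span_singleton_self a
  have : a ∈ Submodule.span ℤ (Set.range p) := hamem
  obtain ⟨c, hc⟩ := (Submodule.mem_span_range_iff_exists_fun ℤ).1 this
  refine ⟨a, ?_, ⟨c, by simpa [smul_eq_mul] using hc⟩, hdvd⟩
  intro h0
  apply hp
  funext j
  have := hdvd j
  rw [h0] at this
  exact zero_dvd_iff.1 this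

lemma basis_mem_lattice (b : Fin (n+1) → V1 n) (j : Fin (n+1)) : b j ∈ latticeOf b := by
  refine ⟨fun i => if i = j then 1 else 0, ?_⟩
  rw [Finset.sum_eq_single j]
  · simp
  · intro i _ hij; simp [hij]
  · intro h; exact absurd (Finset.mem_univ j) h

lemma dual_lift (b : Fin (n+1) → V1 n) (hb : LinearIndependent ℝ b)
    (hslice : ∃ w : Fin n → V1 n, (∀ i, w i ∈ latticeOf b ∧ (w i).2 = 0) ∧
      LinearIndependent ℝ fun i => (w i).1)
    (u : Fin n → ℝ) (hu : u ∈ dualN (Prod.fst '' (latticeOf b ∩ {p : V1 n | p.2 = 0}))) :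
    ∃ z : ℝ, ((u, z) : V1 n) ∈ dualLat (latticeOf b) := by
  classical
  obtain ⟨w, hw, hwli⟩ := hslice
  set β : Fin (n+1) → ℝ := fun j => (b j).2 with hβ
  set A : Fin n → Fin (n+1) → ℤ := fun i => Classical.choose (hw i).1 with hA
  have hAw : ∀ i, w i = ∑ j, ((A i j : ℝ)) • b j := fun i => Classical.choose_spec (hw i).1
  -- orthogonality of rows against β
  have horth : ∀ i, ∑ j, (A i j : ℝ) * β j = 0 := by
    intro i
    have h1 : (w i).2 = ∑ j, (A i j : ℝ) * β j := by
      rw [hAw i, Prod.snd_sum]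
      exact Finset.sum_congr rfl fun j _ => by simp [Prod.smul_snd, hβ]
    rw [← h1, (hw i).2]
  -- rows are independent
  have hAli : ∀ g : Fin n → ℝ, (∀ j, ∑ i, g i * (A i j : ℝ) = 0) → g = 0 := by
    intro g hg
    have hsum : ∑ i, g i • w i = 0 := by
      have : ∑ i, g i • w i = ∑ j, (∑ i, g i * (A i j : ℝ)) • b j := by
        simp_rw [hAw, Finset.smul_sum]
        rw [Finset.sum_comm]
        exact Finset.sum_congr rfl fun j _ => by
          rw [Finset.sum_smul]
          exact Finset.sum_congr rfl fun i _ => by rw [smul_smul]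
      rw [this]
      exact Finset.sum_eq_zero fun j _ => by rw [hg j, zero_smul]
    have hfst : ∑ i, g i • (w i).1 = 0 := by
      have := congrArg Prod.fst hsum
      rw [Prod.fst_sum] at this
      simpa [Prod.smul_fst] using this
    have := Fintype.linearIndependent_iff.1 hwli g (by simpa using hfst)
    funext i; exact this i
  -- some β j is nonzero
  have hβne : ∃ j0, β j0 ≠ 0 := by
    by_contra h0
    have hz : ∀ j, β j = 0 := by
      intro j; by_contra hj; exact h0 ⟨j, hj⟩
    have hfli : LinearIndependent ℝ (fun j => (b j).1) := by
      rw [Fintype.linearIndependent_iff]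
      intro g hg
      have hsum : ∑ j, g j • b j = 0 := by
        have : ∀ j, g j • b j = (g j • (b j).1, 0) := by
          intro j
          have h2 : (b j).2 = 0 := hz j
          have : (g j • b j).2 = 0 := by simp [Prod.smul_snd, h2]
          exact Prod.ext rfl this
        rw [Finset.sum_congr rfl fun j _ => this j]
        rw [Prod.ext_iff]
        constructor
        · rw [Prod.fst_sum]; simpa using hg
        · rw [Prod.snd_sum]; simp
      exact Fintype.linearIndependent_iff.1 hb g hsum
    have hcard := hfli.fintype_card_le_finrank
    simp [Module.finrank_pi] at hcard
  obtain ⟨j0, hj0⟩ := hβne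
  -- integer kernel vector p with β = t • p
  obtain ⟨v, hv, hvker⟩ := exists_rat_kernel A
  obtain ⟨p, D, hD, hpne, hpcast, hpker⟩ := exists_int_kernel A v hv hvker
  obtain ⟨t, hβt⟩ := beta_eq_smul A β hAli horth p hpne hpker
  have ht : t ≠ 0 := by
    intro h0
    apply hj0
    rw [hβt j0, h0, zero_mul]
  obtain ⟨a, ha0, ⟨c0, hc0⟩, hdvd⟩ := exists_gcd p hpne
  set l0 : V1 n := ∑ j, ((c0 j : ℝ)) • b j with hl0
  have hl0mem : l0 ∈ latticeOf b := ⟨c0, rfl⟩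
  have hl02 : l0.2 = t * a := by
    rw [hl0, Prod.snd_sum]
    have : ∀ j, (((c0 j : ℝ)) • b j).2 = t * ((c0 j * p j : ℤ) : ℝ) := by
      intro j
      simp only [Prod.smul_snd, smul_eq_mul]
      rw [show (b j).2 = β j from rfl, hβt j]
      push_cast
      ring
    rw [Finset.sum_congr rfl fun j _ => this j, ← Finset.mul_sum, ← Int.cast_sum, hc0]
  have hta : t * a ≠ 0 := mul_ne_zero ht (Int.cast_ne_zero.2 ha0)
  set z : ℝ := - dotn u l0.1 / (t * a) with hzdef
  have hzh : z * (t * a) = - dotn u l0.1 := by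
    rw [hzdef]; field_simp
  -- each generator pairs integrally
  have hgen : ∀ j, ∃ m : ℤ, dot1 (u, z) (b j) = m := by
    intro j
    obtain ⟨qj, hqj⟩ := hdvd j
    set vj : V1 n := b j - (qj : ℝ) • l0 with hvj
    have hvjmem : vj ∈ latticeOf b := by
      refine ⟨fun i => (if i = j then 1 else 0) - qj * c0 i, ?_⟩
      have : ∀ i : Fin (n+1),
          (((if i = j then (1:ℤ) else 0) - qj * c0 i : ℤ) : ℝ) • b i
            = ((if i = j then (1:ℝ) else 0)) • b i - (qj : ℝ) • ((c0 i : ℝ) • b i) := by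
        intro i
        push_cast
        rw [sub_smul, smul_smul]
      rw [Finset.sum_congr rfl fun i _ => this i, Finset.sum_sub_distrib, ← Finset.smul_sum]
      rw [hvj, ← hl0]
      congr 1
      rw [Finset.sum_eq_single j]
      · simp
      · intro i _ hij; simp [hij]
      · intro h; exact absurd (Finset.mem_univ j) h
    have hvj2 : vj.2 = 0 := by
      rw [hvj]
      simp only [Prod.snd_sub, Prod.smul_snd, smul_eq_mul]
      rw [show (b j).2 = β j from rfl, hβt j, hl02, hqj]
      push_cast
      ring
    obtain ⟨m, hm⟩ := hu vj.1 ⟨vj, ⟨hvjmem, hvj2⟩, rfl⟩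
    refine ⟨m, ?_⟩
    have hfst : vj.1 = (b j).1 - (qj : ℝ) • l0.1 := rfl
    rw [hfst, dotn_sub_right, dotn_smul_right] at hm
    -- dot1 (u,z) (b j) = dotn u (b j).1 + z * β j
    show dotn u (b j).1 + z * (b j).2 = (m : ℝ)
    rw [show (b j).2 = β j from rfl, hβt j, hqj]
    have hz2 : z * (t * ((a : ℝ) * (qj : ℝ))) = (qj : ℝ) * (z * (t * a)) := by ring
    push_cast
    rw [hz2, hzh]
    linarith [hm]
  refine ⟨z, ?_⟩
  intro l hl
  obtain ⟨c, rfl⟩ := hl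
  choose m hm using hgen
  refine ⟨∑ j, c j * m j, ?_⟩
  rw [dot1_sum]
  rw [Finset.sum_congr rfl fun j _ => dot1_zsmul (⟨u, z⟩ : V1 n) (c j) (b j)]
  rw [Finset.sum_congr rfl fun j _ => by rw [hm j]]
  push_cast
  ring
end Lift

section Analytic

lemma expz_add (s r : ℝ) : expz (s + r) = expz s * expz r := by
  unfold expz; rw [← Complex.exp_add]; congr 1; push_cast; ring

lemma expz_eq_one_iff (t : ℝ) : expz t = 1 ↔ ∃ m : ℤ, t = (m : ℝ) := by
  unfold expz
  rw [Complex.exp_eq_one_iff]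
  constructor
  · rintro ⟨m, hm⟩
    refine ⟨m, ?_⟩
    have h2 : (2 * (Real.pi : ℂ) * Complex.I) ≠ 0 := Complex.two_pi_I_ne_zero
    have h3 : (2 * (Real.pi : ℂ) * Complex.I) * (t : ℂ)
        = (2 * (Real.pi : ℂ) * Complex.I) * (m : ℂ) := by
      rw [show (2 * (Real.pi : ℂ) * Complex.I) * (t : ℂ)
        = 2 * (Real.pi : ℂ) * Complex.I * (t : ℂ) from by ring, hm]; ring
    have := mul_left_cancel₀ h2 h3
    exact_mod_cast this
  · rintro ⟨m, rfl⟩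
    exact ⟨m, by push_cast; ring⟩

def coef (y0 z : ℝ) : ℂ :=
  if z = 0 then (y0 : ℂ) else (expz (z * y0) - 1) / (2 * (Real.pi : ℂ) * Complex.I * z)

lemma integral_expz (y0 z : ℝ) : (∫ y in (0:ℝ)..y0, expz (z * y)) = coef y0 z := by
  by_cases hz : z = 0
  · subst hz
    simp [expz, coef, Complex.exp_zero]
  · have hc : (2 * (Real.pi : ℂ) * Complex.I * z) ≠ 0 :=
      mul_ne_zero Complex.two_pi_I_ne_zero (by exact_mod_cast hz)
    have heq : ∀ y : ℝ, expz (z * y) = Complex.exp ((2 * (Real.pi : ℂ) * Complex.I * z) * y) := by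
      intro y; unfold expz; congr 1; push_cast; ring
    rw [intervalIntegral.integral_congr (g := fun y : ℝ =>
      Complex.exp ((2 * (Real.pi : ℂ) * Complex.I * z) * y)) (fun y _ => heq y)]
    rw [integral_exp_mul_complex hc]
    rw [coef, if_neg hz]
    congr 1
    rw [← heq y0]
    norm_num

lemma coef_ne_zero {y0 z : ℝ} (hy0 : 0 < y0) (h : ∀ m : ℤ, z ≠ 0 → z * y0 ≠ (m : ℝ)) :
    coef y0 z ≠ 0 := by
  rw [coef]
  by_cases hz : z = 0
  · rw [if_pos hz]
    exact_mod_cast hy0.ne'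
  · rw [if_neg hz]
    apply div_ne_zero
    · rw [sub_ne_zero]
      intro h1
      obtain ⟨m, hm⟩ := (expz_eq_one_iff _).1 h1
      exact h m hz hm
    · exact mul_ne_zero Complex.two_pi_I_ne_zero (by exact_mod_cast hz)

lemma wave_section_continuous {n : ℕ} (k : V1 n) (x : Fin n → ℝ) :
    Continuous fun y : ℝ => wave k (x, y) := by
  unfold wave expz dot1
  apply Complex.continuous_exp.comp
  apply Continuous.mul continuous_const
  exact Complex.continuous_ofReal.comp (by continuity)

lemma wave_section_integrable {n : ℕ} (k : V1 n) (x : Fin n → ℝ) (y0 : ℝ) :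
    IntervalIntegrable (fun y : ℝ => wave k (x, y)) volume 0 y0 :=
  (wave_section_continuous k x).intervalIntegrable 0 y0

lemma proj_wave {n : ℕ} (y0 : ℝ) (k : V1 n) :
    Proj y0 (wave k) = coef y0 k.2 • waveN k.1 := by
  funext x
  show (∫ y in (0:ℝ)..y0, wave k (x, y)) = _
  have hpt : ∀ y : ℝ, wave k (x, y) = expz (dotn k.1 x) * expz (k.2 * y) := by
    intro y
    rw [wave, ← expz_add]
    rfl
  rw [intervalIntegral.integral_congr (g := fun y : ℝ =>
    expz (dotn k.1 x) * expz (k.2 * y)) (fun y _ => hpt y)]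
  rw [intervalIntegral.integral_const_mul, integral_expz]
  simp only [Pi.smul_apply, waveN, smul_eq_mul]
  ring

end Analytic

section Main
variable {n : ℕ}

lemma dual_proj (L : Set (V1 n)) (k : V1 n) (hk : k ∈ dualLat L) :
    k.1 ∈ dualN (Prod.fst '' (L ∩ {p : V1 n | p.2 = 0})) := by
  rintro v ⟨l, ⟨hl, hl2⟩, rfl⟩
  obtain ⟨m, hm⟩ := hk l hl
  refine ⟨m, ?_⟩
  rw [← hm, dot1]
  simp only [Set.mem_setOf_eq] at hl2
  rw [hl2, mul_zero, add_zero]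

lemma dualLat_countable (b : Fin (n+1) → V1 n) (hb : LinearIndependent ℝ b) :
    (dualLat (latticeOf b)).Countable := by
  rw [← Set.countable_coe_iff]
  have hrank : Fintype.card (Fin (n+1)) = Module.finrank ℝ (V1 n) := by
    simp [Module.finrank_prod, Module.finrank_pi]
  have hspan : Submodule.span ℝ (Set.range b) = ⊤ :=
    hb.span_eq_top_of_card_eq_finrank hrank
  set Φ : ↥(dualLat (latticeOf b)) → (Fin (n+1) → ℤ) :=
    fun k j => Classical.choose (k.2 (b j) (basis_mem_lattice b j)) with hΦ
  have hΦspec : ∀ (k : ↥(dualLat (latticeOf b))) (j : Fin (n+1)),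
      dot1 (k : V1 n) (b j) = ((Φ k j : ℤ) : ℝ) :=
    fun k j => Classical.choose_spec (k.2 (b j) (basis_mem_lattice b j))
  have hinj : Function.Injective Φ := by
    intro k k' hkk
    have hbj : ∀ j, dot1 ((k : V1 n) - (k' : V1 n)) (b j) = 0 := by
      intro j
      rw [dot1_sub_left, hΦspec k j, hΦspec k' j, hkk]
      ring
    have hall : ∀ v : V1 n, dot1 ((k : V1 n) - (k' : V1 n)) v = 0 := by
      intro v
      have hv : v ∈ Submodule.span ℝ (Set.range b) := hspan ▸ Submodule.mem_top
      induction hv using Submodule.span_induction with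
      | mem v hv => obtain ⟨j, rfl⟩ := hv; exact hbj j
      | zero => exact (dot1L _).map_zero
      | add x y _ _ hx hy =>
          rw [show dot1 ((k : V1 n) - (k' : V1 n)) (x + y)
            = dot1 _ x + dot1 _ y from (dot1L _).map_add x y, hx, hy]; ring
      | smul c x _ hx =>
          rw [show dot1 ((k : V1 n) - (k' : V1 n)) (c • x)
            = c • dot1 _ x from (dot1L _).map_smul c x, hx]; simp
    have := dot1_self_eq_zero (hall ((k : V1 n) - (k' : V1 n)))
    exact Subtype.ext (sub_eq_zero.1 this)
  exact hinj.countable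

lemma K_countable (b : Fin (n+1) → V1 n) (hb : LinearIndependent ℝ b) :
    {t : ℝ | ∃ k ∈ dualLat (latticeOf b), k.2 ≠ 0 ∧ ∃ m : ℤ, t = (m : ℝ) / k.2}.Countable := by
  have h1 := dualLat_countable b hb
  have hsub : {t : ℝ | ∃ k ∈ dualLat (latticeOf b), k.2 ≠ 0 ∧ ∃ m : ℤ, t = (m : ℝ) / k.2}
      ⊆ ⋃ k ∈ dualLat (latticeOf b), Set.range (fun m : ℤ => (m : ℝ) / k.2) := by
    rintro t ⟨k, hk, _, m, rfl⟩
    exact Set.mem_biUnion hk ⟨m, rfl⟩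
  exact ((h1.biUnion fun k _ => Set.countable_range _)).mono hsub

end Main

/-- if `ℒ ∩ (ℝⁿ × {0})` contains `n` linearly independent vectors, there is a
countable set `K = ⋃ {(1/z)ℤ : (k̃,z) ∈ ℒ*, z ≠ 0}` such that `Π_{y0}(𝒳_ℒ) = 𝒳_𝓛̃`
for every `y0 > 0` outside `K`. -/
theorem stmt_6 (n : ℕ) (hn : 1 ≤ n) (b : Fin (n+1) → V1 n) (hb : LinearIndependent ℝ b)
    (hslice : ∃ w : Fin n → V1 n, (∀ i, w i ∈ latticeOf b ∧ (w i).2 = 0) ∧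
      LinearIndependent ℝ fun i => (w i).1) :
    ∃ K : Set ℝ,
      K = {t : ℝ | ∃ k ∈ dualLat (latticeOf b), k.2 ≠ 0 ∧ ∃ m : ℤ, t = (m : ℝ) / k.2} ∧
      K.Countable ∧
      ∀ y0 : ℝ, 0 < y0 → y0 ∉ K →
        Proj y0 '' (XL (latticeOf b) : Set (V1 n → ℂ)) =
          (XN (Prod.fst '' (latticeOf b ∩ {p : V1 n | p.2 = 0})) :
            Set ((Fin n → ℝ) → ℂ)) := by
  classical
  refine ⟨_, rfl, K_countable b hb, ?_⟩
  intro y0 hy0 hK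
  have hcoef : ∀ k : V1 n, k ∈ dualLat (latticeOf b) → coef y0 k.2 ≠ 0 := by
    intro k hk
    apply coef_ne_zero hy0
    intro m hz hzm
    apply hK
    refine ⟨k, hk, hz, m, ?_⟩
    field_simp
    linarith [hzm]
  have hfwd : ∀ f, f ∈ XL (latticeOf b) →
      (∀ x, IntervalIntegrable (fun y => f (x, y)) volume 0 y0) ∧
        Proj y0 f ∈ XN (Prod.fst '' (latticeOf b ∩ {p : V1 n | p.2 = 0})) := by
    intro f hf
    induction hf using Submodule.span_induction with
    | mem f hf =>
        obtain ⟨k, hk, rfl⟩ := hf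
        refine ⟨fun x => wave_section_integrable k x y0, ?_⟩
        rw [proj_wave]
        exact Submodule.smul_mem _ _
          (Submodule.subset_span ⟨k.1, dual_proj (latticeOf b) k hk, rfl⟩)
    | zero =>
        refine ⟨fun x => ?_, ?_⟩
        · exact (intervalIntegrable_const : IntervalIntegrable (fun _ : ℝ => (0:ℂ)) volume 0 y0)
        · have h0 : Proj y0 (0 : V1 n → ℂ) = 0 := by
            funext x
            show (∫ y in (0:ℝ)..y0, (0:ℂ)) = 0
            simp
          rw [h0]
          exact Submodule.zero_mem _
    | add f g hf hg ihf ihg =>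
        refine ⟨fun x => (ihf.1 x).add (ihg.1 x), ?_⟩
        have hadd : Proj y0 (f + g) = Proj y0 f + Proj y0 g := by
          funext x
          show (∫ y in (0:ℝ)..y0, (f (x, y) + g (x, y))) = _
          rw [intervalIntegral.integral_add (ihf.1 x) (ihg.1 x)]
          rfl
        rw [hadd]
        exact Submodule.add_mem _ ihf.2 ihg.2
    | smul c f hf ih =>
        refine ⟨fun x => (ih.1 x).smul c, ?_⟩
        have hsm : Proj y0 (c • f) = c • Proj y0 f := by
          funext x
          show (∫ y in (0:ℝ)..y0, c • f (x, y)) = _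
          rw [intervalIntegral.integral_smul]
          rfl
        rw [hsm]
        exact Submodule.smul_mem _ _ ih.2
  have hbwd : ∀ g, g ∈ XN (Prod.fst '' (latticeOf b ∩ {p : V1 n | p.2 = 0})) →
      ∃ f, f ∈ XL (latticeOf b) ∧
        (∀ x, IntervalIntegrable (fun y => f (x, y)) volume 0 y0) ∧ Proj y0 f = g := by
    intro g hg
    induction hg using Submodule.span_induction with
    | mem g hg =>
        obtain ⟨u, hu, rfl⟩ := hg
        obtain ⟨z, hz⟩ := dual_lift b hb hslice u hu
        set c : ℂ := coef y0 z with hc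
        have hcne : c ≠ 0 := hcoef (u, z) hz
        refine ⟨c⁻¹ • wave (u, z), Submodule.smul_mem _ _
          (Submodule.subset_span ⟨(u, z), hz, rfl⟩),
          fun x => (wave_section_integrable (u, z) x y0).smul c⁻¹, ?_⟩
        have hsm : Proj y0 (c⁻¹ • wave (u, z)) = c⁻¹ • Proj y0 (wave (u, z)) := by
          funext x
          show (∫ y in (0:ℝ)..y0, c⁻¹ • wave (u, z) (x, y)) = _
          rw [intervalIntegral.integral_smul]
          rfl
        rw [hsm, proj_wave]
        have h1 : coef y0 (((u, z) : V1 n)).2 = c := rfl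
        rw [h1, smul_smul, inv_mul_cancel₀ hcne, one_smul]
    | zero =>
        refine ⟨0, Submodule.zero_mem _, fun x =>
          (intervalIntegrable_const : IntervalIntegrable (fun _ : ℝ => (0:ℂ)) volume 0 y0), ?_⟩
        funext x
        show (∫ y in (0:ℝ)..y0, (0:ℂ)) = 0
        simp
    | add g1 g2 hg1 hg2 ih1 ih2 =>
        obtain ⟨f1, hf1, hi1, hp1⟩ := ih1
        obtain ⟨f2, hf2, hi2, hp2⟩ := ih2
        refine ⟨f1 + f2, Submodule.add_mem _ hf1 hf2, fun x => (hi1 x).add (hi2 x), ?_⟩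
        have hadd : Proj y0 (f1 + f2) = Proj y0 f1 + Proj y0 f2 := by
          funext x
          show (∫ y in (0:ℝ)..y0, (f1 (x, y) + f2 (x, y))) = _
          rw [intervalIntegral.integral_add (hi1 x) (hi2 x)]
          rfl
        rw [hadd, hp1, hp2]
    | smul c g hg ih =>
        obtain ⟨f, hf, hi, hp⟩ := ih
        refine ⟨c • f, Submodule.smul_mem _ _ hf, fun x => (hi x).smul c, ?_⟩
        have hsm : Proj y0 (c • f) = c • Proj y0 f := by
          funext x
          show (∫ y in (0:ℝ)..y0, c • f (x, y)) = _
          rw [intervalIntegral.integral_smul]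
          rfl
        rw [hsm, hp]
  apply Set.Subset.antisymm
  · rintro g ⟨f, hf, rfl⟩
    exact (hfwd f hf).2
  · intro g hg
    obtain ⟨f, hf, _, hproj⟩ := hbwd g hg
    exact ⟨f, hf, hproj⟩

end
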